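/- Assume the CRK setup and all hypotheses of Theorem 3.1 (skew-symmetric M, K, skew-symmetric N×N matrix D, S continuously differentiable in its first argument, Δt > 0, continuous δ_t z_j : [0,1] → ℝ^d, z_j(τ) = z_j⁰ + Δt ∫₀¹ A_{τ,σ} δ_t z_j(σ) dσ, z_j¹ = z_j⁰ + Δt ∫₀¹ δ_t z_j(σ) dσ, δ_x z_j(τ) = Σ_k D_{jk} z_k(τ), and M δ_t z_j(τ) + K δ_x z_j(τ) = ∇_z S(z_j(τ), x_j) for all τ and j). Then the discrete global energy is exactly conserved: Σ_{j=0}^{N−1} E_j¹ = Σ_{j=0}^{N−1} E_j⁰, where E_j^α = S(z_j^α, x_j) − (1/2) (z_j^α)ᵀ K Σ_{k=0}^{N−1} D_{jk} z_k^α for α ∈ {0,1}. -/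

import Mathlib

open scoped Matrix

noncomputable def dotCLM {d : ℕ} (g : Fin d → ℝ) : (Fin d → ℝ) →L[ℝ] ℝ :=
  ∑ i : Fin d, g i • (ContinuousLinearMap.proj i : (Fin d → ℝ) →L[ℝ] ℝ)

noncomputable def lag {s : ℕ} (c : Fin s → ℝ) (i : Fin s) (τ : ℝ) : ℝ :=
  (Lagrange.basis (Finset.univ : Finset (Fin s)) c i).eval τ

noncomputable def bw {s : ℕ} (c : Fin s → ℝ) (i : Fin s) : ℝ :=
  ∫ τ in (0:ℝ)..1, lag c i τ

noncomputable def Acrk {s : ℕ} (c : Fin s → ℝ) (τ σ : ℝ) : ℝ :=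
  ∑ i : Fin s, (1 / bw c i) * (∫ α in (0:ℝ)..τ, lag c i α) * lag c i σ

noncomputable def wavg {s : ℕ} (c : Fin s → ℝ) (i : Fin s) {G : Type*}
    [NormedAddCommGroup G] [NormedSpace ℝ G] (f : ℝ → G) : G :=
  (1 / bw c i) • ∫ τ in (0:ℝ)..1, lag c i τ • f τ

/-! ### auxiliary lemmas -/

lemma lag_continuous {s : ℕ} (c : Fin s → ℝ) (i : Fin s) : Continuous (lag c i) :=
  (Lagrange.basis (Finset.univ : Finset (Fin s)) c i).continuous

lemma dotCLM_apply {d : ℕ} (g v : Fin d → ℝ) : dotCLM g v = g ⬝ᵥ v := by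
  simp [dotCLM, dotProduct]

lemma skew_dot {d : ℕ} {Q : Matrix (Fin d) (Fin d) ℝ} (hQ : Qᵀ = -Q) (u w : Fin d → ℝ) :
    u ⬝ᵥ Q *ᵥ w = -(w ⬝ᵥ Q *ᵥ u) := by
  rw [Matrix.dotProduct_mulVec, ← Matrix.mulVec_transpose, hQ, Matrix.neg_mulVec,
    neg_dotProduct, dotProduct_comm]

lemma skew_dot_self {d : ℕ} {Q : Matrix (Fin d) (Fin d) ℝ} (hQ : Qᵀ = -Q) (u : Fin d → ℝ) :
    u ⬝ᵥ Q *ᵥ u = 0 := by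
  have := skew_dot hQ u u; linarith

lemma hasDerivAt_proj {d : ℕ} {f : ℝ → Fin d → ℝ} {f' : Fin d → ℝ} {t : ℝ}
    (h : HasDerivAt f f' t) (a : Fin d) : HasDerivAt (fun t => f t a) (f' a) t :=
  (ContinuousLinearMap.proj a : (Fin d → ℝ) →L[ℝ] ℝ).hasFDerivAt.comp_hasDerivAt t h

lemma hasDerivAt_dot {d : ℕ} {u w : ℝ → Fin d → ℝ} {u' w' : Fin d → ℝ} {t : ℝ}
    (hu : HasDerivAt u u' t) (hw : HasDerivAt w w' t) :
    HasDerivAt (fun t => u t ⬝ᵥ w t) (u' ⬝ᵥ w t + u t ⬝ᵥ w') t := by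
  have h : ∀ a : Fin d, HasDerivAt (fun t => u t a * w t a)
      (u' a * w t a + u t a * w' a) t :=
    fun a => (hasDerivAt_proj hu a).mul (hasDerivAt_proj hw a)
  simpa [dotProduct, Finset.sum_add_distrib] using
    HasDerivAt.fun_sum (fun a (_ : a ∈ Finset.univ) => h a)

lemma hasDerivAt_mulVec {d : ℕ} (Q : Matrix (Fin d) (Fin d) ℝ) {w : ℝ → Fin d → ℝ}
    {w' : Fin d → ℝ} {t : ℝ} (hw : HasDerivAt w w' t) :
    HasDerivAt (fun t => Q *ᵥ w t) (Q *ᵥ w') t := by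
  have := (LinearMap.toContinuousLinearMap (Matrix.mulVecLin Q)).hasFDerivAt.comp_hasDerivAt t hw
  simpa [Function.comp_def, Matrix.mulVecLin_apply] using this

lemma sum_dot {d : ℕ} {ι : Type*} (t : Finset ι) (f : ι → Fin d → ℝ) (w : Fin d → ℝ) :
    (∑ i ∈ t, f i) ⬝ᵥ w = ∑ i ∈ t, f i ⬝ᵥ w := by
  simp only [dotProduct, Finset.sum_apply, Finset.sum_mul]
  rw [Finset.sum_comm]

lemma continuous_dot {d : ℕ} {u w : ℝ → Fin d → ℝ} (hu : Continuous u) (hw : Continuous w) :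
    Continuous fun t => u t ⬝ᵥ w t := by
  simp only [dotProduct]
  exact continuous_finset_sum _ fun a _ =>
    ((continuous_apply a).comp hu).mul ((continuous_apply a).comp hw)

lemma continuous_mulVec {d : ℕ} (Q : Matrix (Fin d) (Fin d) ℝ) {w : ℝ → Fin d → ℝ}
    (hw : Continuous w) : Continuous fun t => Q *ᵥ w t := by
  have := (LinearMap.toContinuousLinearMap (Matrix.mulVecLin Q)).continuous.comp hw
  simpa [Function.comp_def, Matrix.mulVecLin_apply] using this

theorem stmt7 {s d N : ℕ} (hs : 1 ≤ s) (c : Fin s → ℝ) (hc : Function.Injective c)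
    (hb : ∀ i, bw c i ≠ 0)
    (M K : Matrix (Fin d) (Fin d) ℝ) (hM : Mᵀ = -M) (hK : Kᵀ = -K)
    (S : (Fin d → ℝ) → ℝ → ℝ) (gradS : (Fin d → ℝ) → ℝ → (Fin d → ℝ))
    (hS : ∀ (x : ℝ) (w : Fin d → ℝ), HasFDerivAt (fun w' => S w' x) (dotCLM (gradS w x)) w)
    (hSc : ∀ x : ℝ, Continuous fun w => gradS w x)
    (D : Matrix (Fin N) (Fin N) ℝ) (hD : Dᵀ = -D)
    (x : Fin N → ℝ) (Δt : ℝ) (hΔt : 0 < Δt)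
    (δtz : Fin N → ℝ → (Fin d → ℝ)) (hδtc : ∀ j, ContinuousOn (δtz j) (Set.Icc 0 1))
    (z0 : Fin N → Fin d → ℝ) (z : Fin N → ℝ → (Fin d → ℝ))
    (hz : ∀ j τ, z j τ = z0 j + Δt • ∫ σ in (0:ℝ)..1, Acrk c τ σ • δtz j σ)
    (z1 : Fin N → Fin d → ℝ)
    (hz1 : ∀ j, z1 j = z0 j + Δt • ∫ σ in (0:ℝ)..1, δtz j σ)
    (δxz : Fin N → ℝ → (Fin d → ℝ))
    (hδx : ∀ j τ, δxz j τ = ∑ k, D j k • z k τ)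
    (hcoll : ∀ j, ∀ τ ∈ Set.Icc (0:ℝ) 1,
      M.mulVec (δtz j τ) + K.mulVec (δxz j τ) = gradS (z j τ) (x j))
    (E0 E1 : Fin N → ℝ)
    (hE0 : ∀ j, E0 j = S (z j 0) (x j)
        - (1/2) * dotProduct (z j 0) (K.mulVec (∑ k, D j k • z k 0)))
    (hE1 : ∀ j, E1 j = S (z1 j) (x j)
        - (1/2) * dotProduct (z1 j) (K.mulVec (∑ k, D j k • z1 k))) :
    ∑ j, E1 j = ∑ j, E0 j := by
  classical
  -- weighted averages
  set v : Fin N → Fin s → (Fin d → ℝ) := fun j i => wavg c i (δtz j) with hv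
  -- basic integrability
  have hicc : Set.uIcc (0:ℝ) 1 = Set.Icc 0 1 := Set.uIcc_of_le zero_le_one
  have hint : ∀ (j : Fin N) (i : Fin s),
      IntervalIntegrable (fun σ => lag c i σ • δtz j σ) MeasureTheory.volume 0 1 := by
    intro j i
    apply ContinuousOn.intervalIntegrable
    rw [hicc]
    exact ((lag_continuous c i).continuousOn).smul (hδtc j)
  have hintr : ∀ (j : Fin N) (i : Fin s) (r : ℝ),
      IntervalIntegrable (fun σ => r • (lag c i σ • δtz j σ)) MeasureTheory.volume 0 1 := by
    intro j i r
    apply ContinuousOn.intervalIntegrable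
    rw [hicc]
    exact continuousOn_const.fun_smul (((lag_continuous c i).continuousOn).fun_smul (hδtc j))
  have hbv : ∀ j i, (∫ σ in (0:ℝ)..1, lag c i σ • δtz j σ) = bw c i • v j i := by
    intro j i
    rw [hv]; simp only [wavg, smul_smul]
    rw [mul_one_div, div_self (hb i), one_smul]
  -- representation of z
  have zrep : ∀ j τ, z j τ = z0 j + Δt • ∑ i, (∫ α in (0:ℝ)..τ, lag c i α) • v j i := by
    intro j τ
    rw [hz]
    congr 1
    congr 1
    have hre : ∀ σ, Acrk c τ σ • δtz j σ
        = ∑ i, ((1 / bw c i) * (∫ α in (0:ℝ)..τ, lag c i α)) • (lag c i σ • δtz j σ) := by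
      intro σ
      rw [Acrk, Finset.sum_smul]
      exact Finset.sum_congr rfl fun i _ => by rw [mul_smul]
    calc (∫ σ in (0:ℝ)..1, Acrk c τ σ • δtz j σ)
        = ∑ i, ∫ σ in (0:ℝ)..1,
            ((1 / bw c i) * (∫ α in (0:ℝ)..τ, lag c i α)) • (lag c i σ • δtz j σ) := by
          simp_rw [hre]
          exact intervalIntegral.integral_finset_sum fun i _ => hintr j i _
      _ = ∑ i, (∫ α in (0:ℝ)..τ, lag c i α) • v j i := by
          refine Finset.sum_congr rfl fun i _ => ?_
          rw [intervalIntegral.integral_smul, hbv, smul_smul]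
          congr 1
          field_simp
          exact mul_div_cancel_left₀ _ (hb i)
  have hz0 : ∀ j, z j 0 = z0 j := by
    intro j; rw [zrep]
    simp [intervalIntegral.integral_same]
  -- z j 1 = z1 j
  haveI : Nonempty (Fin s) := Fin.pos_iff_nonempty.mp hs
  have hsum1 : ∀ σ : ℝ, ∑ i, lag c i σ = 1 := by
    intro σ
    have h := Lagrange.sum_basis (Set.injOn_of_injective hc)
      (Finset.univ_nonempty (α := Fin s))
    have := congrArg (Polynomial.eval σ) h
    simpa [lag, Polynomial.eval_finset_sum] using this
  have hz1' : ∀ j, z j 1 = z1 j := by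
    intro j
    rw [zrep, hz1 j]
    congr 1
    congr 1
    have : ∀ i : Fin s, (∫ α in (0:ℝ)..1, lag c i α) • v j i
        = ∫ σ in (0:ℝ)..1, lag c i σ • δtz j σ := by
      intro i
      have hb' : (∫ α in (0:ℝ)..1, lag c i α) = bw c i := rfl
      rw [hb', ← hbv]
    rw [Finset.sum_congr rfl fun i _ => this i,
      ← intervalIntegral.integral_finset_sum fun i (_ : i ∈ Finset.univ) => hint j i]
    refine intervalIntegral.integral_congr fun σ _ => ?_
    rw [← Finset.sum_smul, hsum1, one_smul]
  -- derivative of z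
  set P : Fin N → ℝ → (Fin d → ℝ) := fun j τ => ∑ i, lag c i τ • v j i with hP
  have hzderiv : ∀ j τ, HasDerivAt (z j) (Δt • P j τ) τ := by
    intro j τ
    have hLi : ∀ i : Fin s,
        HasDerivAt (fun u => ∫ α in (0:ℝ)..u, lag c i α) (lag c i τ) τ :=
      fun i => intervalIntegral.integral_hasDerivAt_right
        ((lag_continuous c i).intervalIntegrable _ _)
        ((lag_continuous c i).stronglyMeasurableAtFilter _ _)
        (lag_continuous c i).continuousAt
    have h : HasDerivAt (fun u => z0 j + Δt • ∑ i, (∫ α in (0:ℝ)..u, lag c i α) • v j i)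
        (Δt • P j τ) τ := by
      refine HasDerivAt.const_add _ ?_
      exact (HasDerivAt.fun_sum fun i _ => (hLi i).smul_const (v j i)).fun_const_smul Δt
    have hfe : (fun u => z0 j + Δt • ∑ i, (∫ α in (0:ℝ)..u, lag c i α) • v j i) = z j :=
      funext fun u => (zrep j u).symm
    rwa [hfe] at h
  have hzc : ∀ j, Continuous (z j) := fun j =>
    continuous_iff_continuousAt.mpr fun τ => (hzderiv j τ).continuousAt
  have hPc : ∀ j, Continuous (P j) := by
    intro j; rw [hP]
    exact continuous_finset_sum _ fun i _ => (lag_continuous c i).smul continuous_const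
  -- energy function and its derivative
  set F : ℝ → ℝ := fun τ => ∑ j, (S (z j τ) (x j)
      - (1/2) * ((z j τ) ⬝ᵥ K *ᵥ (∑ k, D j k • z k τ))) with hFdef
  set φ : ℝ → ℝ := fun τ => ∑ j, ((gradS (z j τ) (x j)) ⬝ᵥ (Δt • P j τ)
      - (1/2) * ((Δt • P j τ) ⬝ᵥ K *ᵥ (∑ k, D j k • z k τ)
        + (z j τ) ⬝ᵥ K *ᵥ (∑ k, D j k • (Δt • P k τ)))) with hφdef
  have hF : ∀ τ, HasDerivAt F (φ τ) τ := by
    intro τ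
    refine HasDerivAt.fun_sum fun j _ => HasDerivAt.fun_sub ?_ ?_
    · have h1 := (hS (x j) (z j τ)).comp_hasDerivAt τ (hzderiv j τ)
      simpa [Function.comp_def, dotCLM_apply, dotProduct_comm] using h1
    · have hW : HasDerivAt (fun t => ∑ k, D j k • z k t) (∑ k, D j k • (Δt • P k τ)) τ :=
        HasDerivAt.fun_sum fun k _ => (hzderiv k τ).fun_const_smul (D j k)
      exact (hasDerivAt_dot (hzderiv j τ) (hasDerivAt_mulVec K hW)).const_mul (1/2)
  have hφc : Continuous φ := by
    rw [hφdef]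
    refine continuous_finset_sum _ fun j _ => Continuous.fun_sub ?_ ?_
    · exact continuous_dot ((hSc (x j)).comp (hzc j)) (continuous_const.fun_smul (hPc j))
    · refine Continuous.fun_mul continuous_const (Continuous.fun_add ?_ ?_)
      · exact continuous_dot (continuous_const.fun_smul (hPc j))
          (continuous_mulVec K (continuous_finset_sum _ fun k _ => continuous_const.fun_smul (hzc k)))
      · exact continuous_dot (hzc j)
          (continuous_mulVec K (continuous_finset_sum _ fun k _ =>
            continuous_const.fun_smul (continuous_const.fun_smul (hPc k))))
  have hFTC : (∫ τ in (0:ℝ)..1, φ τ) = F 1 - F 0 :=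
    intervalIntegral.integral_eq_sub_of_hasDerivAt (fun τ _ => hF τ)
      (hφc.intervalIntegrable 0 1)
  -- expand dot-mulVec-sum
  have expand : ∀ (a : Fin d → ℝ) (b : Fin N → Fin d → ℝ) (j : Fin N),
      a ⬝ᵥ K *ᵥ (∑ k, D j k • b k) = ∑ k, D j k * (a ⬝ᵥ K *ᵥ b k) := by
    intro a b j
    have h1 : K *ᵥ (∑ k, D j k • b k) = ∑ k, D j k • (K *ᵥ b k) := by
      rw [show K *ᵥ (∑ k, D j k • b k) = Matrix.mulVecLin K (∑ k, D j k • b k) from rfl,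
        map_sum]
      simp [Matrix.mulVecLin_apply, Matrix.mulVec_smul]
    rw [h1, show ∀ w, a ⬝ᵥ w = dotCLM a w from fun w => (dotCLM_apply a w).symm, map_sum]
    simp [dotCLM_apply, dotProduct_smul, smul_eq_mul]
  have hskewD : ∀ k j, D k j = - D j k := by
    intro k j
    have := congrFun (congrFun hD j) k
    simpa [Matrix.transpose_apply] using this
  have key2 : ∀ (p u : Fin N → Fin d → ℝ),
      ∑ j, u j ⬝ᵥ K *ᵥ (∑ k, D j k • p k) = ∑ j, p j ⬝ᵥ K *ᵥ (∑ k, D j k • u k) := by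
    intro p u
    calc ∑ j, u j ⬝ᵥ K *ᵥ (∑ k, D j k • p k)
        = ∑ j, ∑ k, D j k * (u j ⬝ᵥ K *ᵥ p k) := by
          exact Finset.sum_congr rfl fun j _ => expand (u j) p j
      _ = ∑ j, ∑ k, D j k * (p j ⬝ᵥ K *ᵥ u k) := by
          rw [Finset.sum_comm]
          refine Finset.sum_congr rfl fun a _ => Finset.sum_congr rfl fun b _ => ?_
          rw [hskewD b a, skew_dot hK (u b) (p a)]
          ring
      _ = ∑ j, p j ⬝ᵥ K *ᵥ (∑ k, D j k • u k) :=
          (Finset.sum_congr rfl fun j _ => (expand (p j) u j).symm)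
  -- pointwise identity on [0,1]
  have hφeq : ∀ τ ∈ Set.Icc (0:ℝ) 1,
      φ τ = Δt * ∑ j, ∑ i, lag c i τ * (v j i ⬝ᵥ M *ᵥ δtz j τ) := by
    intro τ hτ
    have hg : ∀ j, gradS (z j τ) (x j) = M *ᵥ δtz j τ + K *ᵥ (∑ k, D j k • z k τ) := by
      intro j; rw [← hcoll j τ hτ, hδx]
    have hkey := key2 (fun k => Δt • P k τ) (fun k => z k τ)
    rw [hφdef]
    simp only [hg]
    rw [Finset.sum_sub_distrib, ← Finset.mul_sum, Finset.sum_add_distrib]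
    rw [hkey]
    have hone : ∀ j, (M *ᵥ δtz j τ + K *ᵥ (∑ k, D j k • z k τ)) ⬝ᵥ (Δt • P j τ)
        = (Δt • P j τ) ⬝ᵥ (M *ᵥ δtz j τ) + (Δt • P j τ) ⬝ᵥ K *ᵥ (∑ k, D j k • z k τ) := by
      intro j
      rw [dotProduct_comm, dotProduct_add]
    simp only [hone]
    rw [Finset.sum_add_distrib]
    have hdots : ∀ j, (Δt • P j τ) ⬝ᵥ (M *ᵥ δtz j τ)
        = Δt * ∑ i, lag c i τ * (v j i ⬝ᵥ M *ᵥ δtz j τ) := by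
      intro j
      rw [smul_dotProduct, smul_eq_mul]
      congr 1
      rw [hP]
      rw [sum_dot]
      exact Finset.sum_congr rfl fun i _ => by
        rw [smul_dotProduct, smul_eq_mul]
    rw [Finset.sum_congr rfl fun j _ => hdots j, ← Finset.mul_sum]
    ring
  -- the integral vanishes
  have hzero : ∀ (j : Fin N) (i : Fin s),
      (∫ τ in (0:ℝ)..1, lag c i τ * (v j i ⬝ᵥ M *ᵥ δtz j τ)) = 0 := by
    intro j i
    set L : (Fin d → ℝ) →L[ℝ] ℝ :=
      (dotCLM (v j i)).comp (LinearMap.toContinuousLinearMap (Matrix.mulVecLin M)) with hL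
    have hLw : ∀ w, L w = v j i ⬝ᵥ M *ᵥ w := by
      intro w
      rw [hL]
      simp [dotCLM_apply, Matrix.mulVecLin_apply]
    calc (∫ τ in (0:ℝ)..1, lag c i τ * (v j i ⬝ᵥ M *ᵥ δtz j τ))
        = ∫ τ in (0:ℝ)..1, L (lag c i τ • δtz j τ) := by
          refine intervalIntegral.integral_congr fun τ _ => ?_
          rw [hLw, Matrix.mulVec_smul, dotProduct_smul, smul_eq_mul]
      _ = L (∫ τ in (0:ℝ)..1, lag c i τ • δtz j τ) :=
          L.intervalIntegral_comp_comm (hint j i)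
      _ = L (bw c i • v j i) := by rw [hbv]
      _ = 0 := by
          rw [map_smul, hLw, skew_dot_self hM, smul_zero]
  have hintφ : (∫ τ in (0:ℝ)..1, φ τ) = 0 := by
    have hco : ∀ (j : Fin N) (i : Fin s),
        ContinuousOn (fun τ => lag c i τ * (v j i ⬝ᵥ M *ᵥ δtz j τ)) (Set.Icc (0:ℝ) 1) := by
      intro j i
      refine ((lag_continuous c i).continuousOn).mul ?_
      have hLc : Continuous fun w : Fin d → ℝ => v j i ⬝ᵥ M *ᵥ w := by
        have := ((dotCLM (v j i)).comp
          (LinearMap.toContinuousLinearMap (Matrix.mulVecLin M))).continuous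
        convert this using 1
        funext w
        simp [dotCLM_apply, Matrix.mulVecLin_apply]
      exact hLc.comp_continuousOn (hδtc j)
    have hii : ∀ (j : Fin N) (i : Fin s),
        IntervalIntegrable (fun τ => lag c i τ * (v j i ⬝ᵥ M *ᵥ δtz j τ))
          MeasureTheory.volume 0 1 := by
      intro j i
      apply ContinuousOn.intervalIntegrable
      rw [hicc]
      exact hco j i
    calc (∫ τ in (0:ℝ)..1, φ τ)
        = ∫ τ in (0:ℝ)..1, Δt * ∑ j, ∑ i, lag c i τ * (v j i ⬝ᵥ M *ᵥ δtz j τ) := by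
          refine intervalIntegral.integral_congr fun τ hτ => ?_
          rw [hicc] at hτ
          exact hφeq τ hτ
      _ = Δt * ∑ j, ∑ i, ∫ τ in (0:ℝ)..1, lag c i τ * (v j i ⬝ᵥ M *ᵥ δtz j τ) := by
          have hii2 : ∀ j : Fin N, IntervalIntegrable
              (fun τ => ∑ i, lag c i τ * (v j i ⬝ᵥ M *ᵥ δtz j τ))
              MeasureTheory.volume 0 1 := by
            intro j
            apply ContinuousOn.intervalIntegrable
            rw [hicc]
            exact continuousOn_finset_sum _ fun i _ => hco j i
          rw [intervalIntegral.integral_const_mul]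
          congr 1
          rw [intervalIntegral.integral_finset_sum fun j (_ : j ∈ Finset.univ) => hii2 j]
          exact Finset.sum_congr rfl fun j _ =>
            intervalIntegral.integral_finset_sum fun i (_ : i ∈ Finset.univ) => hii j i
      _ = 0 := by
          simp [hzero]
  -- conclude
  have hF1 : F 1 = ∑ j, E1 j := by
    rw [hFdef]
    refine Finset.sum_congr rfl fun j _ => ?_
    rw [hE1 j, hz1' j]
    simp only [fun k => (hz1' k).symm]
  have hF0 : F 0 = ∑ j, E0 j := by
    rw [hFdef]
    exact Finset.sum_congr rfl fun j _ => (hE0 j).symm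
  have := hFTC
  rw [hintφ] at this
  rw [← hF1, ← hF0]
  linarith
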